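/- Let f : ℝⁿ → ℝ be differentiable, μ-strongly convex and L-smooth with 0 < μ ≤ L, and let x* be a global minimizer of f. Define the gradient-method iterates by x_{k+1} = x_k − (1/L)∇f(x_k) starting from any x_0. Then for every k ≥ 0, f(x_k) − f(x*) ≤ (1 − μ/L)^k · (f(x_0) − f(x*)). -/

import Mathlib

open scoped RealInnerProductSpace

/-- Linear convergence of the constant-step gradient method for a
μ-strongly convex, L-smooth function. -/
theorem gradient_method_linear_convergence
    (n : ℕ) (f : EuclideanSpace ℝ (Fin n) → ℝ)
    (f' : EuclideanSpace ℝ (Fin n) → EuclideanSpace ℝ (Fin n))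
    (hgrad : ∀ x, HasGradientAt f (f' x) x)
    (μ L : ℝ) (hμ : 0 < μ) (hμL : μ ≤ L)
    (hsc : ∀ x y : EuclideanSpace ℝ (Fin n),
      f x ≥ f y + ⟪f' y, x - y⟫ + μ / 2 * ‖x - y‖ ^ 2)
    (hsm : ∀ x y : EuclideanSpace ℝ (Fin n),
      f x ≤ f y + ⟪f' y, x - y⟫ + L / 2 * ‖x - y‖ ^ 2)
    (xstar : EuclideanSpace ℝ (Fin n)) (hmin : ∀ x, f xstar ≤ f x)
    (x : ℕ → EuclideanSpace ℝ (Fin n))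
    (hiter : ∀ k : ℕ, x (k + 1) = x k - (1 / L) • f' (x k)) :
    ∀ k : ℕ, f (x k) - f xstar ≤ (1 - μ / L) ^ k * (f (x 0) - f xstar) := by
  have hL : (0:ℝ) < L := lt_of_lt_of_le hμ hμL
  -- PL inequality: ‖f' y‖² ≥ 2μ(f y − f xstar)
  have hPL : ∀ y, 2 * μ * (f y - f xstar) ≤ ‖f' y‖ ^ 2 := by
    intro y
    have h1 := hsc xstar y
    set d := xstar - y with hd
    set g := f' y with hg
    have hsq : (0:ℝ) ≤ μ / 2 * ‖d + (1/μ) • g‖ ^ 2 := by positivity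
    have hexp : ‖d + (1/μ) • g‖ ^ 2
        = ‖d‖ ^ 2 + 2 * ((1/μ) * ⟪g, d⟫) + (1/μ)^2 * ‖g‖ ^ 2 := by
      rw [@norm_add_sq_real, real_inner_smul_right, norm_smul,
        real_inner_comm]
      simp [mul_pow, abs_of_pos (by positivity : (0:ℝ) < 1/μ)]
    -- from h1 : f xstar ≥ f y + ⟪g, d⟫ + μ/2 ‖d‖²
    -- and 0 ≤ μ/2 ‖d + g/μ‖² = μ/2‖d‖² + ⟪g,d⟫ + ‖g‖²/(2μ)
    rw [hexp] at hsq
    have h2 : (0:ℝ) ≤ μ/2 * ‖d‖^2 + ⟪g, d⟫ + 1/(2*μ) * ‖g‖^2 := by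
      have hμ' : μ ≠ 0 := ne_of_gt hμ
      calc (0:ℝ) ≤ μ / 2 * (‖d‖ ^ 2 + 2 * ((1/μ) * ⟪g, d⟫) + (1/μ)^2 * ‖g‖ ^ 2) := hsq
        _ = μ/2 * ‖d‖^2 + ⟪g, d⟫ + 1/(2*μ) * ‖g‖^2 := by field_simp
    have h4 : f y - f xstar ≤ 1/(2*μ) * ‖g‖^2 := by linarith
    have h5 := mul_le_mul_of_nonneg_left h4 (by positivity : (0:ℝ) ≤ 2*μ)
    have h6 : 2*μ*(1/(2*μ) * ‖g‖^2) = ‖g‖^2 := by field_simp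
    linarith
  -- descent: f (x (k+1)) ≤ f (x k) − 1/(2L) ‖f' (x k)‖²
  have hdesc : ∀ k, f (x (k+1)) ≤ f (x k) - 1/(2*L) * ‖f' (x k)‖ ^ 2 := by
    intro k
    have h := hsm (x (k+1)) (x k)
    have hdiff : x (k+1) - x k = -((1/L) • f' (x k)) := by
      rw [hiter k]; abel
    rw [hdiff] at h
    have hin : ⟪f' (x k), -((1/L) • f' (x k))⟫ = -(1/L) * ‖f' (x k)‖^2 := by
      rw [inner_neg_right, real_inner_smul_right, real_inner_self_eq_norm_sq]
      ring
    have hnr : ‖-((1/L) • f' (x k))‖ ^ 2 = (1/L)^2 * ‖f' (x k)‖^2 := by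
      rw [norm_neg, norm_smul, mul_pow]
      simp [abs_of_pos (by positivity : (0:ℝ) < 1/L)]
    rw [hin, hnr] at h
    have hL' : L ≠ 0 := ne_of_gt hL
    calc f (x (k+1)) ≤ f (x k) + -(1/L) * ‖f' (x k)‖^2 + L/2 * ((1/L)^2 * ‖f' (x k)‖^2) := h
      _ = f (x k) - 1/(2*L) * ‖f' (x k)‖ ^ 2 := by field_simp; ring
  -- combine: contraction
  have hcontr : ∀ k, f (x (k+1)) - f xstar ≤ (1 - μ/L) * (f (x k) - f xstar) := by
    intro k
    have h1 := hdesc k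
    have h2 := hPL (x k)
    have h3 : (0:ℝ) < 1/(2*L) := by positivity
    have h5 := mul_le_mul_of_nonneg_left h2 h3.le
    have hq : 1/(2*L)*(2*μ*(f (x k) - f xstar)) = μ/L * (f (x k) - f xstar) := by
      field_simp
    rw [hq] at h5
    have hgoal : (1 - μ/L) * (f (x k) - f xstar)
        = (f (x k) - f xstar) - μ/L * (f (x k) - f xstar) := by ring
    linarith
  have hfac : (0:ℝ) ≤ 1 - μ/L := by
    have : μ/L ≤ 1 := (div_le_one hL).mpr hμL
    linarith
  intro k
  induction k with
  | zero => simp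
  | succ k ih =>
    calc f (x (k+1)) - f xstar ≤ (1 - μ/L) * (f (x k) - f xstar) := hcontr k
      _ ≤ (1 - μ/L) * ((1 - μ/L) ^ k * (f (x 0) - f xstar)) :=
          mul_le_mul_of_nonneg_left ih hfac
      _ = (1 - μ/L) ^ (k+1) * (f (x 0) - f xstar) := by ring
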